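/- Radial conjugation, special case m = −(1+k)/2. Fix real M, a, k and set Δ(r) = r² − 2Mr + a². Let r₀ ∈ ℝ with Δ(r₀) > 0 and let φ : ℝ → ℂ be twice continuously differentiable on a neighbourhood of r₀ on which Δ > 0. Then at r₀: Δ^{(1+k)/2} · Δ^{−k} · d/dr[ Δ^{k+1} · d/dr( Δ^{−(1+k)/2} φ ) ] = Δ φ'' − ( (k + 1) + (k² − 1)(r − M)²/Δ ) φ; in particular the first-derivative term is absent. -/

import Mathlib

set_option maxHeartbeats 1000000


noncomputable section

/-- Radial conjugation identity, special case `m = −(1+k)/2`: the first-derivative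
term is absent and
`Δ^{(1+k)/2} Δ^{−k} (Δ^{k+1} (Δ^{−(1+k)/2} φ)')' = Δ φ'' − ((k+1) + (k²−1)(r−M)²/Δ) φ`. -/
theorem radial_conjugation_special (M a k : ℝ)
    (Δ : ℝ → ℝ) (hΔ : ∀ r, Δ r = r ^ 2 - 2 * M * r + a ^ 2)
    (r₀ : ℝ) (V : Set ℝ) (hV : IsOpen V) (hr₀ : r₀ ∈ V)
    (hpos : ∀ r ∈ V, 0 < Δ r)
    (φ : ℝ → ℂ) (hφ : ContDiffOn ℝ 2 φ V) :
    ((Δ r₀ ^ ((1 + k) / 2) : ℝ) : ℂ) * ((Δ r₀ ^ (-k) : ℝ) : ℂ) *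
      deriv (fun r => ((Δ r ^ (k + 1) : ℝ) : ℂ) *
        deriv (fun r' => ((Δ r' ^ (-((1 + k) / 2)) : ℝ) : ℂ) * φ r') r) r₀
    = (Δ r₀ : ℂ) * deriv (deriv φ) r₀
      - (((k + 1) : ℝ) + (((k ^ 2 - 1) * (r₀ - M) ^ 2 / Δ r₀ : ℝ) : ℂ)) * φ r₀ := by
  have hVmem : V ∈ nhds r₀ := hV.mem_nhds hr₀
  -- derivative of Δ
  have hΔ' : ∀ r : ℝ, HasDerivAt Δ (2 * r - 2 * M) r := by
    intro r
    have hpoly : HasDerivAt (fun x : ℝ => x ^ 2 - 2 * M * x + a ^ 2) (2 * r - 2 * M) r := by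
      have h := (((hasDerivAt_pow 2 r).sub ((hasDerivAt_id r).const_mul (2 * M))).add_const
        (a ^ 2))
      exact h.congr_deriv (by simp)
    exact hpoly.congr_of_eventuallyEq (Filter.Eventually.of_forall hΔ)
  -- derivative of rpow of Δ on V
  have hrpow : ∀ (p : ℝ) (r : ℝ), r ∈ V →
      HasDerivAt (fun x => Δ x ^ p) (p * Δ r ^ (p - 1) * (2 * r - 2 * M)) r := by
    intro p r hr
    have h := (hΔ' r).rpow_const (p := p) (Or.inl (ne_of_gt (hpos r hr)))
    convert h using 1
    ring
  -- derivatives of φ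
  have hφ1 : ∀ r ∈ V, HasDerivAt φ (deriv φ r) r := by
    intro r hr
    exact ((hφ.differentiableOn (by norm_num)).differentiableAt (hV.mem_nhds hr)).hasDerivAt
  have hφ2 : HasDerivAt (deriv φ) (deriv (deriv φ) r₀) r₀ := by
    have h : ContDiffOn ℝ 1 (deriv φ) V := hφ.deriv_of_isOpen hV (by norm_num)
    exact ((h.differentiableOn (by norm_num)).differentiableAt hVmem).hasDerivAt
  set m : ℝ := -((1 + k) / 2) with hm
  -- derivative of the inner function on V
  have hinner : ∀ r ∈ V, HasDerivAt (fun r' => ((Δ r' ^ m : ℝ) : ℂ) * φ r')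
      (((m * Δ r ^ (m - 1) * (2 * r - 2 * M) : ℝ) : ℂ) * φ r
        + ((Δ r ^ m : ℝ) : ℂ) * deriv φ r) r := by
    intro r hr
    exact ((hrpow m r hr).ofReal_comp).mul (hφ1 r hr)
  -- eventual equality of the function being differentiated
  have hfg : (fun r => ((Δ r ^ (k + 1) : ℝ) : ℂ) *
        deriv (fun r' => ((Δ r' ^ m : ℝ) : ℂ) * φ r') r)
      =ᶠ[nhds r₀] (fun r =>
        ((Δ r ^ (k + 1) : ℝ) : ℂ) * ((m * Δ r ^ (m - 1) * (2 * r - 2 * M) : ℝ) : ℂ) * φ r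
        + ((Δ r ^ (k + 1) : ℝ) : ℂ) * ((Δ r ^ m : ℝ) : ℂ) * deriv φ r) := by
    filter_upwards [hVmem] with r hr
    rw [(hinner r hr).deriv]
    ring
  -- derivative of g at r₀
  set L : ℝ := 2 * r₀ - 2 * M with hL
  have hlin : HasDerivAt (fun r : ℝ => 2 * r - 2 * M) 2 r₀ := by
    have h := ((hasDerivAt_id r₀).const_mul (2 : ℝ)).sub_const (2 * M)
    exact h.congr_deriv (by ring)
  have hc1 : HasDerivAt (fun r => (m * Δ r ^ (m - 1) * (2 * r - 2 * M) : ℝ))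
      (m * ((m - 1) * Δ r₀ ^ (m - 1 - 1) * L) * L + m * Δ r₀ ^ (m - 1) * 2) r₀ := by
    exact ((hrpow (m - 1) r₀ hr₀).const_mul m).mul hlin
  have hF1 : HasDerivAt (fun r => ((Δ r ^ (k + 1) : ℝ) : ℂ))
      (((k + 1) * Δ r₀ ^ (k + 1 - 1) * L : ℝ) : ℂ) r₀ := (hrpow (k + 1) r₀ hr₀).ofReal_comp
  have hF2 : HasDerivAt (fun r => ((m * Δ r ^ (m - 1) * (2 * r - 2 * M) : ℝ) : ℂ))
      ((m * ((m - 1) * Δ r₀ ^ (m - 1 - 1) * L) * L + m * Δ r₀ ^ (m - 1) * 2 : ℝ) : ℂ) r₀ :=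
    hc1.ofReal_comp
  have hF3 : HasDerivAt (fun r => ((Δ r ^ m : ℝ) : ℂ))
      ((m * Δ r₀ ^ (m - 1) * L : ℝ) : ℂ) r₀ := (hrpow m r₀ hr₀).ofReal_comp
  have hG := ((hF1.mul hF2).mul (hφ1 r₀ hr₀)).add ((hF1.mul hF3).mul hφ2)
  rw [hfg.deriv_eq, show deriv (fun r => ((Δ r ^ (k + 1) : ℝ) : ℂ) * ((m * Δ r ^ (m - 1) * (2 * r - 2 * M) : ℝ) : ℂ) * φ r
      + ((Δ r ^ (k + 1) : ℝ) : ℂ) * ((Δ r ^ m : ℝ) : ℂ) * deriv φ r) r₀ = _ from hG.deriv]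
  -- now pure algebra at the point r₀
  have hA : 0 < Δ r₀ := hpos r₀ hr₀
  set A : ℝ := Δ r₀ with hAdef
  obtain ⟨u, hu, hu0⟩ : ∃ u : ℝ, A ^ ((k - 1) / 2) = u ∧ u ≠ 0 :=
    ⟨_, rfl, (Real.rpow_pos_of_pos hA _).ne'⟩
  have hpow : ∀ p q e : ℝ, p + q = e → A ^ e = A ^ p * A ^ q := by
    intro p q e h; rw [← h, Real.rpow_add hA]
  have id1 : A ^ ((k + 1) / 2) = u * A := by
    rw [hpow ((k - 1) / 2) 1 ((k + 1) / 2) (by ring), Real.rpow_one, hu]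
  have idp : A ^ ((1 + k) / 2) = u * A := by
    rw [hpow ((k - 1) / 2) 1 ((1 + k) / 2) (by ring), Real.rpow_one, hu]
  have idk : A ^ (k + 1 - 1) = u * (u * A) := by
    rw [hpow ((k - 1) / 2) ((k + 1) / 2) (k + 1 - 1) (by ring), id1, hu]
  have idk1 : A ^ (k + 1) = u * (u * A) * A := by
    rw [hpow (k + 1 - 1) 1 (k + 1) (by ring), idk, Real.rpow_one]
  have idnk : A ^ (-k) = (u * (u * A))⁻¹ := by
    rw [show -k = -(k + 1 - 1) by ring, Real.rpow_neg hA.le, idk]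
  have idm : A ^ m = (u * A)⁻¹ := by
    rw [show m = -((k + 1) / 2) by rw [hm]; ring, Real.rpow_neg hA.le, id1]
  have idm1 : A ^ (m - 1) = (u * A * A)⁻¹ := by
    rw [show m - 1 = -((k + 1) / 2 + 1) by rw [hm]; ring, Real.rpow_neg hA.le,
      hpow ((k + 1) / 2) 1 ((k + 1) / 2 + 1) rfl, Real.rpow_one, id1]
  have idm2 : A ^ (m - 1 - 1) = (u * A * A * A)⁻¹ := by
    rw [show m - 1 - 1 = -((k + 1) / 2 + 1 + 1) by rw [hm]; ring, Real.rpow_neg hA.le,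
      hpow ((k + 1) / 2 + 1) 1 ((k + 1) / 2 + 1 + 1) rfl, Real.rpow_one,
      hpow ((k + 1) / 2) 1 ((k + 1) / 2 + 1) rfl, Real.rpow_one, id1]
  have hA0 : A ≠ 0 := hA.ne'
  have h1 : (A ^ ((1 + k) / 2)) * (A ^ (-k)) *
      ((k + 1) * A ^ (k + 1 - 1) * L * (m * A ^ (m - 1) * L)
        + A ^ (k + 1) * (m * ((m - 1) * A ^ (m - 1 - 1) * L) * L + m * A ^ (m - 1) * 2))
      = -((k + 1) + (k ^ 2 - 1) * (r₀ - M) ^ 2 / A) := by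
    rw [idp, idnk, idk1, idk, idm1, idm2, hm, hL]
    field_simp
    ring
  have h2 : (A ^ ((1 + k) / 2)) * (A ^ (-k)) *
      (A ^ (k + 1) * (m * A ^ (m - 1) * L)
        + ((k + 1) * A ^ (k + 1 - 1) * L * A ^ m + A ^ (k + 1) * (m * A ^ (m - 1) * L))) = 0 := by
    rw [idp, idnk, idk1, idk, idm, idm1, hm]
    field_simp
    ring
  have h3 : (A ^ ((1 + k) / 2)) * (A ^ (-k)) * (A ^ (k + 1) * A ^ m) = A := by
    rw [idp, idnk, idk1, idm]
    field_simp
  have h1c := congrArg (Complex.ofReal) h1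
  have h2c := congrArg (Complex.ofReal) h2
  have h3c := congrArg (Complex.ofReal) h3
  simp only [hL, Pi.mul_apply] at h1c h2c h3c ⊢
  push_cast at h1c h2c h3c
  push_cast
  linear_combination h1c * φ r₀ + h2c * deriv φ r₀ + h3c * deriv (deriv φ) r₀
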